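/- Let G be a finite group admitting a small Mathieu representation, and assume that a 2-Sylow subgroup of G is embeddable into the symmetric group S₆. Then G has no element of order 8, and the 2-Sylow subgroups of G have order at most 8. -/

import Mathlib

open Representation in
lemma avg_trace_eq_finrank_invariants {H : Type*} [Group H] [Fintype H]
    {V : Type*} [AddCommGroup V] [Module ℂ V] [FiniteDimensional ℂ V]
    (ρ : Representation ℂ H V) [Invertible ((Fintype.card H : ℂ))] :
    ⅟(Fintype.card H : ℂ) • ∑ g : H, LinearMap.trace ℂ V (ρ g)
      = Module.finrank ℂ ρ.invariants := by
  rw [← (Representation.isProj_averageMap ρ).trace]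
  simp [Representation.averageMap, GroupAlgebra.average, map_sum,
    Representation.asAlgebraHom_single, MonoidAlgebra.of_apply]



lemma multiset_lcm_not_eight_dvd (s : Multiset ℕ) (h0 : ∀ n ∈ s, n ≠ 0)
    (h8 : ∀ n ∈ s, ¬ (8 ∣ n)) : ¬ (8 ∣ s.lcm) := by
  induction s using Multiset.induction with
  | empty => simp
  | cons a s ih =>
    have ha : a ≠ 0 := h0 a (Multiset.mem_cons_self a s)
    have hsl : s.lcm ≠ 0 := by
      rw [Ne, Multiset.lcm_eq_zero_iff]
      intro hz; exact h0 0 (Multiset.mem_cons_of_mem hz) rfl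
    rw [Multiset.lcm_cons]
    intro hd
    have hl0 : lcm a s.lcm ≠ 0 := by
      rw [Ne, lcm_eq_zero_iff]; rintro (h | h) <;> [exact ha h; exact hsl h]
    have h3 : 2 ^ 3 ∣ lcm a s.lcm := by norm_num at hd ⊢; exact hd
    rw [Nat.Prime.pow_dvd_iff_le_factorization Nat.prime_two hl0] at h3
    have hlcm : lcm a s.lcm = Nat.lcm a s.lcm := lcm_eq_nat_lcm a s.lcm
    rw [hlcm, Nat.factorization_lcm ha hsl] at h3
    rw [Finsupp.sup_apply] at h3
    rcases le_sup_iff.mp h3 with h | h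
    · exact h8 a (Multiset.mem_cons_self a s)
        (by rw [show (8:ℕ) = 2^3 by norm_num,
          Nat.Prime.pow_dvd_iff_le_factorization Nat.prime_two ha]; exact h)
    · apply ih (fun n hn => h0 n (Multiset.mem_cons_of_mem hn))
        (fun n hn => h8 n (Multiset.mem_cons_of_mem hn))
      rw [show (8:ℕ) = 2^3 by norm_num,
        Nat.Prime.pow_dvd_iff_le_factorization Nat.prime_two hsl]
      exact h

lemma perm6_no_order8 (σ : Equiv.Perm (Fin 6)) : orderOf σ ≠ 8 := by
  intro h
  have hl := σ.lcm_cycleType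
  have hd : (8:ℕ) ∣ σ.cycleType.lcm := by rw [hl, h]
  refine multiset_lcm_not_eight_dvd σ.cycleType ?_ ?_ hd
  · intro n hn; have := Equiv.Perm.two_le_of_mem_cycleType hn; omega
  · intro n hn h8n
    have h2 := Equiv.Perm.le_card_support_of_mem_cycleType hn
    have h6 : σ.support.card ≤ 6 := by simpa using σ.support.card_le_univ
    have h2' := Equiv.Perm.two_le_of_mem_cycleType hn
    have := Nat.le_of_dvd (by omega) h8n
    omega



/-- The character value of the small Mathieu representation at an element of the given order. -/
def mathieuCharValue : ℕ → ℂ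
  | 1 => 12
  | 2 => 4
  | 3 => 3
  | 4 => 4
  | 5 => 2
  | 6 => 1
  | 8 => 2
  | 11 => 1
  | _ => 0

/-- A representation is a small Mathieu representation if it is 12-dimensional, every group
element has order in {1,2,3,4,5,6,8,11}, and the character at `g` depends only on the order
of `g`, with the values of the permutation character of `M₁₁` acting on 12 points. -/
def IsSmallMathieuRep {G : Type*} [Group G] {V : Type*} [AddCommGroup V] [Module ℂ V]
    (ρ : Representation ℂ G V) : Prop :=
  Module.finrank ℂ V = 12 ∧
    (∀ g : G, orderOf g ∈ ({1, 2, 3, 4, 5, 6, 8, 11} : Set ℕ)) ∧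
    (∀ g : G, LinearMap.trace ℂ V (ρ g) = mathieuCharValue (orderOf g))

/-- `G` admits a small Mathieu representation. -/
def HasSmallMathieuRep (G : Type*) [Group G] : Prop :=
  ∃ (V : Type) (_ : AddCommGroup V) (_ : Module ℂ V) (ρ : Representation ℂ G V),
    IsSmallMathieuRep ρ

/-- `G` admits a small Mathieu representation whose invariant subspace has dimension ≥ 3. -/
def HasSmallMathieuRep3 (G : Type*) [Group G] : Prop :=
  ∃ (V : Type) (_ : AddCommGroup V) (_ : Module ℂ V) (ρ : Representation ℂ G V),
    IsSmallMathieuRep ρ ∧ 3 ≤ Module.finrank ℂ ρ.invariants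

/-- Condition (4): `G` has a small Mathieu representation `V` with `dim V^G ≥ 3`, the 2-Sylow
subgroups of `G` embed into `S₆`, and `G` is not isomorphic to the dicyclic group `Q₁₂`
(realized in Mathlib as `QuaternionGroup 3`). -/
def Condition4 (G : Type*) [Group G] [Fintype G] : Prop :=
  HasSmallMathieuRep3 G ∧
    (∀ P : Sylow 2 G, ∃ f : P →* Equiv.Perm (Fin 6), Function.Injective f) ∧
    IsEmpty (G ≃* QuaternionGroup 3)

/-- If a finite group `G` admits a small Mathieu representation and its 2-Sylow subgroups embed
into `S₆`, then `G` has no element of order 8 and its 2-Sylow subgroups have order at most 8. -/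
theorem sylow_two_small_of_small_mathieu_rep
    (G : Type*) [Group G] [Fintype G] (h : HasSmallMathieuRep G)
    (hsyl : ∀ P : Sylow 2 G, ∃ f : P →* Equiv.Perm (Fin 6), Function.Injective f) :
    (∀ g : G, orderOf g ≠ 8) ∧ ∀ P : Sylow 2 G, Nat.card P ≤ 8 := by
  classical
  obtain ⟨V, _, _, ρ, hdim, hord, hchar⟩ := h
  haveI : FiniteDimensional ℂ V := FiniteDimensional.of_finrank_pos (by rw [hdim]; norm_num)
  have no8 : ∀ g : G, orderOf g ≠ 8 := by
    intro g hg
    have hp : IsPGroup 2 (Subgroup.zpowers g) :=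
      IsPGroup.of_card (n := 3) (by rw [Nat.card_zpowers, hg]; norm_num)
    obtain ⟨Q, hQ⟩ := hp.exists_le_sylow
    obtain ⟨f, hf⟩ := hsyl Q
    have hm : g ∈ Q := hQ (Subgroup.mem_zpowers g)
    refine perm6_no_order8 (f ⟨g, hm⟩) ?_
    rw [orderOf_injective f hf, Subgroup.orderOf_mk, hg]
  refine ⟨no8, fun P => ?_⟩
  haveI : Fintype (P : Subgroup G) := Fintype.ofFinite _
  obtain ⟨k, hk⟩ := IsPGroup.iff_card.mp P.2
  set n := Fintype.card (P : Subgroup G) with hn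
  have hncard : Nat.card (P : Subgroup G) = n := Nat.card_eq_fintype_card
  have hnpos : 0 < n := Fintype.card_pos
  haveI : Invertible ((n : ℂ)) := invertibleOfNonzero (by exact_mod_cast hnpos.ne')
  set ρP : Representation ℂ (P : Subgroup G) V := ρ.comp (P : Subgroup G).subtype with hρP
  have havg := avg_trace_eq_finrank_invariants ρP
  set m := Module.finrank ℂ (Representation.invariants ρP) with hm
  -- compute character values on P
  have hval : ∀ p : (P : Subgroup G), p ≠ 1 →
      mathieuCharValue (orderOf (p : G)) = 4 := by
    intro p hp
    have hdvd : orderOf (p : G) ∣ 2 ^ k := by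
      rw [Subgroup.orderOf_coe, ← hk]; exact orderOf_dvd_natCard p
    have hne1 : orderOf (p : G) ≠ 1 := by
      rw [Ne, orderOf_eq_one_iff]
      exact fun h1 => hp (Subtype.ext h1)
    have hne8 := no8 (p : G)
    have hmem := hord (p : G)
    simp only [Set.mem_insert_iff, Set.mem_singleton_iff] at hmem
    have h3 : ¬ (3 ∣ 2 ^ k) := by
      intro hd
      have := (Nat.Prime.dvd_of_dvd_pow (by norm_num : Nat.Prime 3) hd)
      omega
    have h5 : ¬ (5 ∣ 2 ^ k) := by
      intro hd
      have := (Nat.Prime.dvd_of_dvd_pow (by norm_num : Nat.Prime 5) hd)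
      omega
    have h11 : ¬ (11 ∣ 2 ^ k) := by
      intro hd
      have := (Nat.Prime.dvd_of_dvd_pow (by norm_num : Nat.Prime 11) hd)
      omega
    rcases hmem with h|h|h|h|h|h|h|h
    · exact absurd h hne1
    · rw [h]; rfl
    · rw [h] at hdvd; exact absurd hdvd h3
    · rw [h]; rfl
    · rw [h] at hdvd; exact absurd hdvd h5
    · rw [h] at hdvd; exact absurd (dvd_trans (by norm_num) hdvd) h3
    · exact absurd h hne8
    · rw [h] at hdvd; exact absurd hdvd h11
  -- rewrite the sum
  have hsum : ∑ g : (P : Subgroup G), LinearMap.trace ℂ V (ρP g)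
      = 12 + ((n - 1 : ℕ) : ℂ) * 4 := by
    have : ∀ g : (P : Subgroup G), LinearMap.trace ℂ V (ρP g)
        = mathieuCharValue (orderOf (g : G)) := fun g => hchar (g : G)
    simp only [this]
    rw [← Finset.add_sum_erase _ _ (Finset.mem_univ 1)]
    have h1 : mathieuCharValue (orderOf ((1 : (P : Subgroup G)) : G)) = 12 := by
      simp [mathieuCharValue]
    rw [h1]
    congr 1
    rw [Finset.sum_congr rfl (fun p hp => hval p (Finset.ne_of_mem_erase hp))]
    rw [Finset.sum_const, Finset.card_erase_of_mem (Finset.mem_univ 1), Finset.card_univ]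
    simp [nsmul_eq_mul]
    simp only [hn, Fintype.card_eq_nat_card]
  rw [hsum] at havg
  have hcast : ((n - 1 : ℕ) : ℂ) = (n : ℂ) - 1 := by
    rw [Nat.cast_sub hnpos]; norm_num
  rw [hcast] at havg
  have hne : (n : ℂ) ≠ 0 := by exact_mod_cast hnpos.ne'
  have heqC : (n : ℂ) * m = 4 * n + 8 := by
    have hinv : (⅟(n : ℂ)) = (n : ℂ)⁻¹ := invOf_eq_inv _
    rw [hinv, smul_eq_mul] at havg
    calc (n : ℂ) * m = (n : ℂ) * ((n:ℂ)⁻¹ * (12 + ((n:ℂ) - 1) * 4)) := by rw [havg]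
      _ = 12 + ((n:ℂ) - 1) * 4 := mul_inv_cancel_left₀ hne _
      _ = 4 * n + 8 := by ring
  have heqN : n * m = 4 * n + 8 := by
    have : ((n * m : ℕ) : ℂ) = ((4 * n + 8 : ℕ) : ℂ) := by push_cast; exact heqC
    exact_mod_cast this
  have hdvd8 : n ∣ 8 := by
    have h1 : n ∣ 4 * n + 8 := heqN ▸ dvd_mul_right n m
    exact (Nat.dvd_add_right (dvd_mul_left n 4)).mp h1
  rw [hncard]
  exact Nat.le_of_dvd (by norm_num) hdvd8
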